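/- arXiv:1911.03119 — 2 statements merged into one kernel-verified Lean document; each statement's English description precedes it below -/
import Mathlib

section
/- For every n ≥ 0 and every P ∈ D_n^{h,≥}, the number of occurrences of the factor UDU in P equals the number of occurrences of the factor FF in φ(P) plus the number of occurrences of the factor FUD in φ(P). -/
inductive Step : Type
  | U | D | F
  deriving DecidableEq, Repr

open Step

/-- Number of occurrences of `p` as a factor (consecutive steps) of `w`. -/
def countFactor (p w : List Step) : ℕ :=
  w.tails.countP fun t => p.isPrefixOf t

/-- `w` is a Dyck path (word over {U,D} with as many U's as D's,
every prefix having at least as many U's as D's). -/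
def IsDyck (w : List Step) : Prop :=
  w.count F = 0 ∧ w.count U = w.count D ∧
    ∀ p : List Step, p <+: w → p.count D ≤ p.count U

/-- `w` is a Motzkin path. -/
def IsMotzkin (w : List Step) : Prop :=
  w.count U = w.count D ∧ ∀ p : List Step, p <+: w → p.count D ≤ p.count U

/-- The (maximal) height of a path. -/
def height (w : List Step) : ℕ :=
  (w.inits.map fun p => p.count U - p.count D).foldr max 0

/-- The set `D^{h,≥}` of Dyck paths with first return decomposition
`P = U α D β` satisfying `h(UαD) ≥ h(β)`, recursively. -/
inductive DH : List Step → Prop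
  | nil : DH []
  | cons (α β : List Step) : DH α → DH β →
      height (U :: (α ++ [D])) ≥ height β → DH (U :: (α ++ [D] ++ β))

/-- The map φ from `D^{h,≥}` to Motzkin paths, as a relation:
φ(ε)=ε, φ(αUD)=φ(α)F, φ(αUUβDγD)=φ(α)φ(γ)Uφ(β)D. -/
inductive Phi : List Step → List Step → Prop
  | nil : Phi [] []
  | flat (α a : List Step) : DH α → Phi α a →
      Phi (α ++ [U, D]) (a ++ [F])
  | up (α β γ a b c : List Step) : DH α → DH β → DH γ →
      Phi α a → Phi β b → Phi γ c →
      Phi (α ++ [U, U] ++ β ++ [D] ++ γ ++ [D]) (a ++ c ++ U :: (b ++ [D]))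

/-- Auxiliary: the list starts with one or more `F`'s followed by a `D`. -/
def fThenD : List Step → Bool
  | F :: D :: _ => true
  | F :: rest => fThenD rest
  | _ => false

/-- Auxiliary: the list starts with one or more `F`'s followed by a `U`. -/
def fThenU : List Step → Bool
  | F :: U :: _ => true
  | F :: rest => fThenU rest
  | _ => false

/-- Number of occurrences of factors of the form `U F^k D` with `k ≥ 1` in `w`. -/
def countUFD (w : List Step) : ℕ :=
  w.tails.countP fun t => match t with
    | U :: rest => fThenD rest
    | _ => false

/-- Number of occurrences of factors of the form `U F^k U` with `k ≥ 1` in `w`. -/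
def countUFU (w : List Step) : ℕ :=
  w.tails.countP fun t => match t with
    | U :: rest => fThenU rest
    | _ => false


section Aux

def cnt (p : List Step) : List Step → ℕ
  | [] => 0
  | x :: w => (if p.isPrefixOf (x :: w) then 1 else 0) + cnt p w

lemma countFactor_eq_cnt (p : List Step) (hp : p ≠ []) (w : List Step) :
    countFactor p w = cnt p w := by
  induction w with
  | nil =>
    simp [countFactor, cnt, List.countP, List.countP.go]
    cases p with
    | nil => exact absurd rfl hp
    | cons a l => simp [List.isPrefixOf]
  | cons x w ih =>
    simp only [countFactor, List.tails_cons, List.countP_cons, cnt] at *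
    rw [← ih]
    rcases h : p.isPrefixOf (x :: w) <;> simp [h]; omega

lemma cnt_nil (p : List Step) : cnt p [] = 0 := rfl

lemma cnt_cons (p : List Step) (x : Step) (w : List Step) :
    cnt p (x :: w) = (if p.isPrefixOf (x :: w) then 1 else 0) + cnt p w := rfl

lemma isPrefixOf_append_of_le {p w : List Step} (v : List Step) (h : p.length ≤ w.length) :
    p.isPrefixOf (w ++ v) = p.isPrefixOf w := by
  rcases hb : p.isPrefixOf w with _|_
  · rcases hb2 : p.isPrefixOf (w ++ v) with _|_
    · rfl
    · exfalso
      have h1 : p <+: w ++ v := List.isPrefixOf_iff_prefix.mp hb2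
      have h2 : w <+: w ++ v := ⟨v, rfl⟩
      have := List.prefix_of_prefix_length_le h1 h2 h
      rw [← List.isPrefixOf_iff_prefix] at this
      simp [this] at hb
  · have h1 : p <+: w := List.isPrefixOf_iff_prefix.mp hb
    have : p <+: w ++ v := h1.trans ⟨v, rfl⟩
    rw [← List.isPrefixOf_iff_prefix] at this
    simp [this]

lemma cnt_short {p w : List Step} (h : w.length < p.length) : cnt p w = 0 := by
  induction w with
  | nil => rfl
  | cons x w ih =>
    rw [cnt_cons]
    have h1 : ¬ p.isPrefixOf (x :: w) := by
      intro hb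
      have := (List.isPrefixOf_iff_prefix.mp hb).length_le
      omega
    simp [h1]
    exact ih (by simp at h ⊢; omega)

lemma cnt_append (p u v : List Step) :
    cnt p (u ++ v) = cnt p u + cnt p (u.drop (u.length + 1 - p.length) ++ v) := by
  induction u with
  | nil => simp [cnt_nil]
  | cons x u ih =>
    rcases Nat.lt_or_ge (u.length + 1) p.length with hl | hl
    · have h0 : (x :: u).length + 1 - p.length = 0 := by simp; omega
      rw [h0, List.drop_zero]
      have : cnt p (x :: u) = 0 := cnt_short (by simp; omega)
      simp [this]
    · have hpfx : p.isPrefixOf (x :: (u ++ v)) = p.isPrefixOf (x :: u) := by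
        rw [← List.cons_append]; exact isPrefixOf_append_of_le v (by simp; omega)
      have hdrop : (x :: u).drop ((x :: u).length + 1 - p.length)
          = u.drop (u.length + 1 - p.length) := by
        have : (x :: u).length + 1 - p.length = (u.length + 1 - p.length) + 1 := by
          simp; omega
        rw [this, List.drop_succ_cons]
      rw [List.cons_append, cnt_cons, cnt_cons, hpfx, hdrop, ih]
      omega

def Bal (w : List Step) : Prop :=
  w.count U = w.count D ∧ ∀ p : List Step, p <+: w → p.count D ≤ p.count U

lemma prefix_append_cases {α : Type*} {p u v : List α} (h : p <+: u ++ v) :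
    p <+: u ∨ ∃ q, p = u ++ q ∧ q <+: v := by
  rcases le_or_gt p.length u.length with hl | hl
  · exact Or.inl (List.prefix_of_prefix_length_le h ⟨v, rfl⟩ hl)
  · right
    have hu : u <+: p := List.prefix_of_prefix_length_le ⟨v, rfl⟩ h (by omega)
    rcases hu with ⟨q, rfl⟩
    refine ⟨q, rfl, ?_⟩
    rcases h with ⟨t, ht⟩
    rw [List.append_assoc] at ht
    exact ⟨t, (List.append_cancel_left ht)⟩

lemma bal_arch {u v : List Step} (hu : Bal u) (hv : Bal v) :
    Bal (U :: (u ++ [D] ++ v)) := by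
  constructor
  · simp [List.count_cons, List.count_append, hu.1, hv.1]; omega
  · intro p hp
    cases p with
    | nil => simp
    | cons s q =>
      rw [List.cons_prefix_cons] at hp
      obtain ⟨rfl, hq⟩ := hp
      rw [List.append_assoc] at hq
      rcases prefix_append_cases hq with hq1 | ⟨r, rfl, hr⟩
      · have := hu.2 q hq1
        simp [List.count_cons]; omega
      · have hcq : u.count D ≤ u.count U := hu.2 u (List.prefix_refl u)
        cases r with
        | nil =>
          simp [List.count_cons, List.count_append, hu.1]
        | cons s' r' =>
          rw [show ([D] ++ v : List Step) = D :: v from rfl, List.cons_prefix_cons] at hr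
          obtain ⟨rfl, hr'⟩ := hr
          have := hv.2 r' hr'
          simp [List.count_cons, List.count_append, hu.1]
          omega




lemma bal_prefix_helper {a b a' b' : List Step} (ha : Bal a) (ha' : Bal a')
    (h : a ++ D :: b = a' ++ D :: b') (hlen : a.length ≤ a'.length) : a = a' := by
  have h1 : a ++ [D] <+: a' ++ [D] := by
    have hp1 : a ++ [D] <+: a' ++ D :: b' := ⟨b, by simpa using h⟩
    have hp2 : a' ++ [D] <+: a' ++ D :: b' := ⟨b', by simp⟩
    exact List.prefix_of_prefix_length_le hp1 hp2 (by simp; omega)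
  rcases lt_or_eq_of_le hlen with hlt | heq
  · exfalso
    have h2 : a ++ [D] <+: a' :=
      List.prefix_of_prefix_length_le h1 ⟨[D], rfl⟩ (by simp; omega)
    have := ha'.2 (a ++ [D]) h2
    simp [List.count_append, ha.1] at this
  · rcases h1 with ⟨t, ht⟩
    have hl0 : t.length = 0 := by
      have := congrArg List.length ht
      simp at this; omega
    rw [List.length_eq_zero_iff] at hl0
    subst hl0
    simp at ht
    exact ht

lemma bal_unique {a b a' b' : List Step} (ha : Bal a) (ha' : Bal a')
    (h : a ++ D :: b = a' ++ D :: b') : a = a' ∧ b = b' := by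
  have heq : a = a' := by
    rcases le_total a.length a'.length with hl | hl
    · exact bal_prefix_helper ha ha' h hl
    · exact (bal_prefix_helper ha' ha h.symm hl).symm
  subst heq
  exact ⟨rfl, by have := List.append_cancel_left h; exact (List.cons_injective.eq_iff.mp this)⟩

lemma DH_bal {w : List Step} (h : DH w) : Bal w := by
  induction h with
  | nil => exact ⟨rfl, by intro p hp; rw [List.prefix_nil.mp hp]; simp⟩
  | cons α β hα hβ hh ihα ihβ => exact bal_arch ihα ihβ

lemma DH_headU {w : List Step} (h : DH w) : w = [] ∨ ∃ w', w = U :: w' := by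
  cases h with
  | nil => exact Or.inl rfl
  | cons α β _ _ _ => exact Or.inr ⟨_, rfl⟩

lemma DH_lastD {w : List Step} (h : DH w) : w = [] ∨ ∃ y, w = y ++ [D] := by
  induction h with
  | nil => exact Or.inl rfl
  | cons α β hα hβ hh ihα ihβ =>
    right
    rcases ihβ with rfl | ⟨y, rfl⟩
    · exact ⟨U :: α, by simp⟩
    · exact ⟨U :: (α ++ [D] ++ y), by simp⟩

lemma DH_last2 {w : List Step} (h : DH w) : w = [] ∨ ∃ y x, w = y ++ [x, D] := by
  rcases DH_lastD h with rfl | ⟨y, rfl⟩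
  · exact Or.inl rfl
  · right
    rcases List.eq_nil_or_concat y with rfl | ⟨z, x, rfl⟩
    · rcases DH_headU h with h' | ⟨w', h'⟩ <;> simp at h'
    · exact ⟨z, x, by simp⟩

lemma DH_inv {w : List Step} (h : DH w) :
    w = [] ∨ ∃ u v, DH u ∧ DH v ∧ height (U :: (u ++ [D])) ≥ height v ∧
      w = U :: (u ++ [D] ++ v) := by
  cases h with
  | nil => exact Or.inl rfl
  | cons α β hα hβ hh => exact Or.inr ⟨α, β, hα, hβ, hh, rfl⟩

lemma le_foldr_max {l : List ℕ} {x : ℕ} (hx : x ∈ l) : x ≤ l.foldr max 0 := by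
  induction l with
  | nil => simp at hx
  | cons y l ih =>
    rcases List.mem_cons.mp hx with rfl | hx'
    · exact le_max_left _ _
    · exact le_trans (ih hx') (le_max_right _ _)

lemma foldr_max_le {l : List ℕ} {n : ℕ} (h : ∀ x ∈ l, x ≤ n) : l.foldr max 0 ≤ n := by
  induction l with
  | nil => simp
  | cons y l ih =>
    simp only [List.foldr_cons, max_le_iff]
    exact ⟨h y (by simp), ih fun x hx => h x (by simp [hx])⟩

lemma val_le_height {p w : List Step} (h : p <+: w) :
    p.count U - p.count D ≤ height w :=
  le_foldr_max (List.mem_map.mpr ⟨p, (List.mem_inits _ _).mpr h, rfl⟩)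

lemma height_le {w : List Step} {n : ℕ}
    (h : ∀ p, p <+: w → p.count U - p.count D ≤ n) : height w ≤ n := by
  apply foldr_max_le
  rintro x hx
  rcases List.mem_map.mp hx with ⟨p, hp, rfl⟩
  exact h p ((List.mem_inits _ _).mp hp)

lemma height_UD_le : height [U, D] ≤ 1 := by
  apply height_le
  intro p hp
  have := hp.sublist.count_le U
  simp [List.count_cons] at this
  omega

lemma two_le_height_UU (w : List Step) : 2 ≤ height (U :: U :: w) := by
  have h : [U, U] <+: U :: U :: w := ⟨w, rfl⟩
  have := val_le_height h
  simpa using this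

lemma DH_low {w : List Step} (h : DH w) (hle : height w ≤ 1) :
    w = [] ∨ ∃ y, w = y ++ [U, D] := by
  induction h with
  | nil => exact Or.inl rfl
  | cons α β hα hβ hh ihα ihβ =>
    rcases DH_headU hα with rfl | ⟨t, rfl⟩
    · have hβ1 : height β ≤ 1 := by
        refine le_trans (le_trans hh ?_) height_UD_le
        simp
      rcases ihβ hβ1 with rfl | ⟨y, rfl⟩
      · exact Or.inr ⟨[], by simp⟩
      · exact Or.inr ⟨U :: D :: y, by simp⟩
    · exfalso
      have : (U :: ((U :: t) ++ [D] ++ β)) = U :: U :: (t ++ [D] ++ β) := by simp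
      rw [this] at hle
      have := two_le_height_UU (t ++ [D] ++ β)
      omega


lemma snoc2_inj {t s : List Step} {x₁ x₂ y₁ y₂ : Step}
    (h : t ++ [x₁, x₂] = s ++ [y₁, y₂]) : x₁ = y₁ ∧ x₂ = y₂ := by
  have := List.append_inj' h rfl
  obtain ⟨-, h2⟩ := this
  injection h2 with h3 h4
  injection h4 with h5 _
  exact ⟨h3, h5⟩

lemma key {w : List Step} (hw : DH w) :
    ∀ α β γ : List Step, DH α → DH β → DH γ →
    w = α ++ [U, U] ++ β ++ [D] ++ γ ++ [D] →
    (∀ s, α ≠ s ++ [U, D]) ∧ height γ ≤ height (U :: (β ++ [D])) := by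
  induction hw with
  | nil =>
    intro α β γ _ _ _ h
    exfalso
    have := congrArg List.length h
    simp at this
  | cons α₁ β₁ hα₁ hβ₁ hh ih₁ ih₂ =>
    intro α β γ hα hβ hγ heq
    rcases DH_inv hα with rfl | ⟨α₂, β₂, hα₂, hβ₂, hh₂, rfl⟩
    · -- α = []
      have heq' : α₁ ++ D :: β₁ = (U :: (β ++ [D] ++ γ)) ++ D :: ([] : List Step) := by
        have : U :: (α₁ ++ [D] ++ β₁) = U :: ((U :: (β ++ [D] ++ γ)) ++ D :: []) := by
          rw [heq]; simp
        injection this with _ h2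
        simpa using h2
      obtain ⟨h1, h2⟩ := bal_unique (DH_bal hα₁) (bal_arch (DH_bal hβ) (DH_bal hγ)) heq'
      subst h1
      rcases DH_inv hα₁ with h' | ⟨u, v, hu, hv, hhv, heq2⟩
      · simp at h'
      · injection heq2 with _ h3
        have h4 : β ++ D :: γ = u ++ D :: v := by simpa using h3
        obtain ⟨rfl, rfl⟩ := bal_unique (DH_bal hβ) (DH_bal hu) h4
        refine ⟨by intro s hs; simpa using congrArg List.length hs, ?_⟩
        simpa using hhv
    · -- α = U :: (α₂ ++ [D] ++ β₂)
      have heq' : α₁ ++ D :: β₁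
          = α₂ ++ D :: (β₂ ++ [U, U] ++ β ++ [D] ++ γ ++ [D]) := by
        have : U :: (α₁ ++ [D] ++ β₁)
            = U :: (α₂ ++ D :: (β₂ ++ [U, U] ++ β ++ [D] ++ γ ++ [D])) := by
          rw [heq]; simp
        injection this with _ h2
        simpa using h2
      obtain ⟨h1, h2⟩ := bal_unique (DH_bal hα₁) (DH_bal hα₂) heq'
      subst h1
      subst h2
      obtain ⟨hc1, hc2⟩ := ih₂ β₂ β γ hβ₂ hβ hγ rfl
      refine ⟨?_, hc2⟩
      intro s hs
      rcases DH_lastD hβ₂ with rfl | ⟨z, rfl⟩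
      · -- β₂ = []
        rcases DH_lastD hα₂ with rfl | ⟨y, rfl⟩
        · -- α₂ = []; height contradiction
          have h2' : 2 ≤ height (([] : List Step) ++ [U, U] ++ β ++ [D] ++ γ ++ [D]) := by
            have : (([] : List Step) ++ [U, U] ++ β ++ [D] ++ γ ++ [D])
                = U :: U :: (β ++ [D] ++ γ ++ [D]) := by simp
            rw [this]
            exact two_le_height_UU _
          have h1' : height (U :: (([] : List Step) ++ [D])) ≤ 1 := by
            simpa using height_UD_le
          omega
        · -- α = U :: ((y ++ [D]) ++ [D] ++ []) = (U :: y) ++ [D, D]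
          have : (U :: y) ++ [D, D] = s ++ [U, D] := by
            rw [← hs]; simp
          exact absurd (snoc2_inj this).1 (by simp)
      · rcases List.eq_nil_or_concat z with rfl | ⟨z', x₂, rfl⟩
        · -- β₂ = [D]
          have : (U :: α₁) ++ [D, D] = s ++ [U, D] := by
            rw [← hs]; simp
          exact absurd (snoc2_inj this).1 (by simp)
        · -- β₂ = z' ++ [x₂, D]
          have hform : (U :: (α₁ ++ [D] ++ z')) ++ [x₂, D] = s ++ [U, D] := by
            rw [← hs]; simp [List.concat_eq_append]
          have hx₂ : x₂ = U := (snoc2_inj hform).1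
          subst hx₂
          exact hc1 z' (by simp [List.concat_eq_append])


lemma Phi_nil_iff {α a : List Step} (h : Phi α a) : α = [] ↔ a = [] := by
  cases h with
  | nil => simp
  | flat α a _ _ =>
    constructor <;> intro h' <;> exfalso <;>
      simpa using congrArg List.length h'
  | up α β γ a b c _ _ _ _ _ _ =>
    constructor <;> intro h' <;> exfalso <;>
      · have := congrArg List.length h'; simp at this

lemma Phi_endF_iff {α a : List Step} (h : Phi α a) :
    (∃ x, α = x ++ [U, D]) ↔ (∃ y, a = y ++ [F]) := by
  cases h with
  | nil =>
    constructor <;> rintro ⟨x, hx⟩ <;> exfalso <;>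
      simpa using congrArg List.length hx
  | flat α a hα _ => exact ⟨fun _ => ⟨a, rfl⟩, fun _ => ⟨α, rfl⟩⟩
  | up α β γ a b c hα hβ hγ _ _ hc =>
    constructor <;> rintro ⟨x, hx⟩ <;> exfalso
    · rcases DH_lastD hγ with rfl | ⟨g, rfl⟩
      · have : (α ++ [U, U] ++ β) ++ [D, D] = x ++ [U, D] := by
          rw [← hx]; simp
        exact absurd (snoc2_inj this).1 (by simp)
      · have : (α ++ [U, U] ++ β ++ [D] ++ g) ++ [D, D] = x ++ [U, D] := by
          rw [← hx]; simp
        exact absurd (snoc2_inj this).1 (by simp)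
    · have : (a ++ c ++ U :: b) ++ [D] = x ++ [F] := by
        rw [← hx]; simp
      have := List.append_inj' this rfl
      simpa using this.2

lemma Phi_head_ne_D {α a : List Step} (h : Phi α a) : ∀ r, a ≠ D :: r := by
  induction h with
  | nil => simp
  | flat α a hα hphi ih =>
    intro r hr
    cases a with
    | nil => simp at hr
    | cons s a' =>
      rw [List.cons_append] at hr
      injection hr with h1 _
      exact ih a' (by rw [h1])
  | up α β γ a b c hα hβ hγ hpa hpb hpc iha ihb ihc =>
    intro r hr
    cases a with
    | nil =>
      cases c with
      | nil => simp at hr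
      | cons s c' =>
        simp only [List.nil_append, List.cons_append] at hr
        injection hr with h1 _
        exact ihc c' (by rw [h1])
    | cons s a' =>
      simp only [List.cons_append] at hr
      injection hr with h1 _
      exact iha a' (by rw [h1])

lemma Phi_last_ne_U {α a : List Step} (h : Phi α a) : ∀ y, a ≠ y ++ [U] := by
  cases h with
  | nil => intro y hy; simpa using congrArg List.length hy
  | flat α a _ _ =>
    intro y hy
    have := List.append_inj' hy rfl
    simpa using this.2
  | up α β γ a b c _ _ _ _ _ _ =>
    intro y hy
    have : (a ++ c ++ U :: b) ++ [D] = y ++ [U] := by rw [← hy]; simp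
    have := List.append_inj' this rfl
    simpa using this.2

lemma Phi_shape {α a : List Step} (h : Phi α a) :
    a = [] ∨ (∃ y, a = y ++ [F]) ∨ (∃ y, a = y ++ [D]) := by
  cases h with
  | nil => exact Or.inl rfl
  | flat α a _ _ => exact Or.inr (Or.inl ⟨a, rfl⟩)
  | up α β γ a b c _ _ _ _ _ _ =>
    exact Or.inr (Or.inr ⟨a ++ c ++ U :: b, by simp⟩)


lemma cnt_append_snoc2 (p : List Step) (hp : p.length = 3) (y : List Step)
    (x₁ x₂ : Step) (v : List Step) :
    cnt p ((y ++ [x₁, x₂]) ++ v) = cnt p (y ++ [x₁, x₂]) + cnt p (x₁ :: x₂ :: v) := by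
  rw [cnt_append]
  have h1 : (y ++ [x₁, x₂]).length + 1 - p.length = y.length := by rw [hp]; simp
  rw [h1, List.drop_left' rfl]
  rfl

lemma cnt_append_snoc1 (p : List Step) (hp : p.length = 2) (y : List Step)
    (x : Step) (v : List Step) :
    cnt p ((y ++ [x]) ++ v) = cnt p (y ++ [x]) + cnt p (x :: v) := by
  rw [cnt_append]
  have h1 : (y ++ [x]).length + 1 - p.length = y.length := by rw [hp]; simp
  rw [h1, List.drop_left' rfl]
  rfl

lemma LA {α : List Step} (w : List Step) (hα : DH α) (hend : ∀ s, α ≠ s ++ [U, D]) :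
    cnt [U, D, U] (α ++ (U :: U :: w)) = cnt [U, D, U] α + cnt [U, D, U] (U :: U :: w) := by
  rcases DH_last2 hα with rfl | ⟨y, x, rfl⟩
  · simp [cnt_nil]
  · rw [cnt_append_snoc2 [U, D, U] rfl]
    have hx : x ≠ U := by
      intro h; subst h; exact hend y rfl
    have : cnt [U, D, U] (x :: D :: U :: U :: w) = cnt [U, D, U] (U :: U :: w) := by
      rw [cnt_cons, cnt_cons]
      cases x <;> simp [List.isPrefixOf] at hx ⊢
    omega

lemma LUU {β γ : List Step} (hβ : DH β) (hγ : DH γ) :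
    cnt [U, D, U] (U :: U :: (β ++ D :: (γ ++ [D])))
      = (if β = [] ∧ γ ≠ [] then 1 else 0) + cnt [U, D, U] (β ++ D :: (γ ++ [D])) := by
  rw [cnt_cons, cnt_cons]
  have i1 : ¬ ([U, D, U].isPrefixOf (U :: U :: (β ++ D :: (γ ++ [D])))) = true := by
    simp [List.isPrefixOf]
  rw [if_neg i1]
  rcases DH_headU hβ with rfl | ⟨b', rfl⟩
  · rcases DH_headU hγ with rfl | ⟨g', rfl⟩
    · simp [List.isPrefixOf]
    · simp [List.isPrefixOf]
  · simp [List.isPrefixOf]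

lemma LB {β : List Step} (w : List Step) (hβ : DH β) :
    cnt [U, D, U] (β ++ (D :: w)) = cnt [U, D, U] β + cnt [U, D, U] w := by
  have hDw : cnt [U, D, U] (D :: w) = cnt [U, D, U] w := by
    rw [cnt_cons]; simp [List.isPrefixOf]
  rcases DH_last2 hβ with rfl | ⟨y, x, rfl⟩
  · simpa [cnt_nil] using hDw
  · rw [cnt_append_snoc2 [U, D, U] rfl]
    have : cnt [U, D, U] (x :: D :: D :: w) = cnt [U, D, U] w := by
      rw [cnt_cons, cnt_cons, hDw]
      simp [List.isPrefixOf]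
    omega

lemma LC {γ : List Step} (hγ : DH γ) :
    cnt [U, D, U] (γ ++ [D]) = cnt [U, D, U] γ := by
  rcases DH_last2 hγ with rfl | ⟨y, x, rfl⟩
  · simp [cnt_cons, cnt_nil, List.isPrefixOf]
  · rw [cnt_append_snoc2 [U, D, U] rfl]
    have : cnt [U, D, U] (x :: D :: [D]) = 0 := by cases x <;> decide
    omega

lemma MA2 {a : List Step} (v : List Step) (ha : a = [] ∨ ∃ y, a = y ++ [D]) :
    cnt [F, F] (a ++ v) = cnt [F, F] a + cnt [F, F] v := by
  rcases ha with rfl | ⟨y, rfl⟩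
  · simp [cnt_nil]
  · rw [cnt_append_snoc1 [F, F] rfl]
    have : cnt [F, F] (D :: v) = cnt [F, F] v := by
      rw [cnt_cons]; simp [List.isPrefixOf]
    omega

lemma MC2 {c : List Step} (w : List Step)
    (hc : c = [] ∨ (∃ z, c = z ++ [F]) ∨ (∃ z, c = z ++ [D])) :
    cnt [F, F] (c ++ (U :: w)) = cnt [F, F] c + cnt [F, F] (U :: w) := by
  rcases hc with rfl | ⟨z, rfl⟩ | ⟨z, rfl⟩
  · simp [cnt_nil]
  · rw [cnt_append_snoc1 [F, F] rfl]
    have : cnt [F, F] (F :: U :: w) = cnt [F, F] (U :: w) := by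
      rw [cnt_cons]; simp [List.isPrefixOf]
    omega
  · rw [cnt_append_snoc1 [F, F] rfl]
    have : cnt [F, F] (D :: U :: w) = cnt [F, F] (U :: w) := by
      rw [cnt_cons]; simp [List.isPrefixOf]
    omega

lemma MU2 (b : List Step) : cnt [F, F] (U :: (b ++ [D])) = cnt [F, F] b := by
  rw [cnt_cons]
  have i1 : ¬ ([F, F].isPrefixOf (U :: (b ++ [D]))) = true := by simp [List.isPrefixOf]
  rw [if_neg i1]
  rcases List.eq_nil_or_concat b with rfl | ⟨z, x, rfl⟩
  · decide
  · rw [List.concat_eq_append, cnt_append_snoc1 [F, F] rfl]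
    have : cnt [F, F] (x :: [D]) = 0 := by cases x <;> decide
    omega

lemma NA3 {a : List Step} (v : List Step) (ha : a = [] ∨ ∃ y, a = y ++ [D]) :
    cnt [F, U, D] (a ++ v) = cnt [F, U, D] a + cnt [F, U, D] v := by
  rcases ha with rfl | ⟨y, rfl⟩
  · simp [cnt_nil]
  · rcases List.eq_nil_or_concat y with rfl | ⟨y', x, rfl⟩
    · have : cnt [F, U, D] (D :: v) = cnt [F, U, D] v := by
        rw [cnt_cons]; simp [List.isPrefixOf]
      simpa [cnt_cons, cnt_nil, List.isPrefixOf] using this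
    · have e : (y'.concat x ++ [D]) ++ v = (y' ++ [x, D]) ++ v := by simp
      have e2 : y'.concat x ++ [D] = y' ++ [x, D] := by simp
      rw [e, e2, cnt_append_snoc2 [F, U, D] rfl]
      have : cnt [F, U, D] (x :: D :: v) = cnt [F, U, D] v := by
        rw [cnt_cons, cnt_cons]
        have h1 : ¬ ([F, U, D].isPrefixOf (x :: D :: v)) = true := by
          cases x <;> simp [List.isPrefixOf]
        have h2 : ¬ ([F, U, D].isPrefixOf (D :: v)) = true := by
          simp [List.isPrefixOf]
        rw [if_neg h1, if_neg h2]; omega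
      omega

lemma NC3_D {c : List Step} (w : List Step) (hc : c = [] ∨ ∃ z, c = z ++ [D]) :
    cnt [F, U, D] (c ++ (U :: w)) = cnt [F, U, D] c + cnt [F, U, D] (U :: w) :=
  NA3 (U :: w) hc

lemma NC3_F {b : List Step} (z : List Step) (hb : ∀ r, b ≠ D :: r) :
    cnt [F, U, D] ((z ++ [F]) ++ (U :: (b ++ [D])))
      = cnt [F, U, D] (z ++ [F]) + ((if b = [] then 1 else 0)
          + cnt [F, U, D] (U :: (b ++ [D]))) := by
  have hind : cnt [F, U, D] (F :: U :: (b ++ [D]))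
      = (if b = [] then 1 else 0) + cnt [F, U, D] (U :: (b ++ [D])) := by
    rw [cnt_cons]
    congr 1
    rcases b with _ | ⟨w, b'⟩
    · simp [List.isPrefixOf]
    · have hw : w ≠ D := fun h => hb b' (by rw [h])
      cases w <;> simp [List.isPrefixOf] at hw ⊢
  rcases List.eq_nil_or_concat z with rfl | ⟨z', x, rfl⟩
  · rw [show (([] ++ [F] : List Step) ++ (U :: (b ++ [D]))) = F :: U :: (b ++ [D]) by simp]
    rw [hind]
    simp [cnt_cons, cnt_nil, List.isPrefixOf]
  · have e : (z'.concat x ++ [F]) ++ (U :: (b ++ [D]))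
        = (z' ++ [x, F]) ++ (U :: (b ++ [D])) := by simp
    have e2 : z'.concat x ++ [F] = z' ++ [x, F] := by simp
    rw [e, e2, cnt_append_snoc2 [F, U, D] rfl]
    rw [cnt_cons]
    have i1 : ¬ ([F, U, D].isPrefixOf (x :: F :: U :: (b ++ [D]))) = true := by
      cases x <;> simp [List.isPrefixOf]
    rw [if_neg i1, hind]
    omega

lemma NU3 {b : List Step} (hlast : ∀ y, b ≠ y ++ [U]) :
    cnt [F, U, D] (U :: (b ++ [D])) = cnt [F, U, D] b := by
  rw [cnt_cons]
  have i1 : ¬ ([F, U, D].isPrefixOf (U :: (b ++ [D]))) = true := by simp [List.isPrefixOf]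
  rw [if_neg i1]
  rcases List.eq_nil_or_concat b with rfl | ⟨z, x, rfl⟩
  · decide
  · rcases List.eq_nil_or_concat z with rfl | ⟨z', w, rfl⟩
    · simp only [List.concat_eq_append, List.nil_append]
      have h1 : cnt [F, U, D] ([x] ++ [D]) = 0 := by cases x <;> decide
      have h2 : cnt [F, U, D] [x] = 0 := by cases x <;> decide
      rw [h1, h2]
    · have hx : x ≠ U := by
        intro h; subst h
        exact hlast (z' ++ [w]) (by simp [List.concat_eq_append])
      have e : (z'.concat w).concat x ++ [D] = (z' ++ [w, x]) ++ [D] := by simp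
      have e2 : (z'.concat w).concat x = z' ++ [w, x] := by
        simp [List.concat_eq_append]
      rw [e, e2, cnt_append_snoc2 [F, U, D] rfl]
      have h0 : cnt [F, U, D] (w :: x :: [D]) = 0 := by
        cases w <;> cases x <;> first | exact absurd rfl hx | decide
      omega

-- MORE






end Aux

/-- φ transports UDU: #UDU(P) = #FF(φP) + #FUD(φP). -/
theorem stmt16 (n : ℕ) (P m : List Step) (hP : DH P) (hlen : P.length = 2 * n)
    (hphi : Phi P m) :
    countFactor [Step.U, Step.D, Step.U] P =
      countFactor [Step.F, Step.F] m + countFactor [Step.F, Step.U, Step.D] m := by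
  rw [countFactor_eq_cnt _ (by simp), countFactor_eq_cnt _ (by simp),
    countFactor_eq_cnt _ (by simp)]
  clear hlen
  revert hP
  induction hphi with
  | nil => intro _; rfl
  | flat α a hα hphi ih =>
    intro _
    have IH := ih hα
    rcases DH_last2 hα with rfl | ⟨y, x, rfl⟩
    · have ha : a = [] := (Phi_nil_iff hphi).mp rfl
      subst ha
      decide
    · have ha_ne : a ≠ [] := by
        intro h
        have := (Phi_nil_iff hphi).mpr h
        simpa using congrArg List.length this
      -- LHS
      have hL : cnt [U, D, U] ((y ++ [x, D]) ++ [U, D])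
          = cnt [U, D, U] (y ++ [x, D]) + (if x = U then 1 else 0) := by
        rw [cnt_append_snoc2 [U, D, U] rfl]
        have : cnt [U, D, U] (x :: D :: [U, D]) = (if x = U then 1 else 0) := by
          cases x <;> decide
        omega
      -- FUD side is unchanged by appending F
      have hD : cnt [F, U, D] (a ++ [F]) = cnt [F, U, D] a := by
        rcases List.eq_nil_or_concat a with rfl | ⟨z, x', rfl⟩
        · decide
        · rcases List.eq_nil_or_concat z with rfl | ⟨z', w, rfl⟩
          · simp only [List.concat_eq_append, List.nil_append]
            have h1 : cnt [F, U, D] ([x'] ++ [F]) = 0 := by cases x' <;> decide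
            have h2 : cnt [F, U, D] [x'] = 0 := by cases x' <;> decide
            rw [h1, h2]
          · have e : (z'.concat w).concat x' ++ [F] = (z' ++ [w, x']) ++ [F] := by simp
            have e2 : (z'.concat w).concat x' = z' ++ [w, x'] := by
              simp [List.concat_eq_append]
            rw [e, e2, cnt_append_snoc2 [F, U, D] rfl]
            have h0 : cnt [F, U, D] (w :: x' :: [F]) = 0 := by
              cases w <;> cases x' <;> decide
            omega
      rcases x with _ | _ | _
      · -- x = U : α ends in UD, so a ends in F
        obtain ⟨z, rfl⟩ := (Phi_endF_iff hphi).mp ⟨y, rfl⟩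
        have hF : cnt [F, F] ((z ++ [F]) ++ [F])
            = cnt [F, F] (z ++ [F]) + 1 := by
          rw [cnt_append_snoc1 [F, F] rfl]
          have : cnt [F, F] (F :: [F]) = 1 := by decide
          omega
        rw [hL, hF, hD, IH]
        first | (simp [cnt_nil]; omega) | simp [cnt_nil] | omega
      · -- x = D
        have haD : ∃ z, a = z ++ [D] := by
          rcases Phi_shape hphi with h | ⟨z, rfl⟩ | h
          · exact absurd h ha_ne
          · exfalso
            obtain ⟨s, hs⟩ := (Phi_endF_iff hphi).mpr ⟨z, rfl⟩
            have := (snoc2_inj hs).1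
            simp at this
          · exact h
        obtain ⟨z, rfl⟩ := haD
        have hF : cnt [F, F] ((z ++ [D]) ++ [F])
            = cnt [F, F] (z ++ [D]) := by
          rw [cnt_append_snoc1 [F, F] rfl]
          have : cnt [F, F] (D :: [F]) = 0 := by decide
          omega
        rw [hL, hF, hD, IH]
        first | (simp [cnt_nil]; omega) | simp [cnt_nil] | omega
      · -- x = F
        have haD : ∃ z, a = z ++ [D] := by
          rcases Phi_shape hphi with h | ⟨z, rfl⟩ | h
          · exact absurd h ha_ne
          · exfalso
            obtain ⟨s, hs⟩ := (Phi_endF_iff hphi).mpr ⟨z, rfl⟩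
            have := (snoc2_inj hs).1
            simp at this
          · exact h
        obtain ⟨z, rfl⟩ := haD
        have hF : cnt [F, F] ((z ++ [D]) ++ [F])
            = cnt [F, F] (z ++ [D]) := by
          rw [cnt_append_snoc1 [F, F] rfl]
          have : cnt [F, F] (D :: [F]) = 0 := by decide
          omega
        rw [hL, hF, hD, IH]
        first | (simp [cnt_nil]; omega) | simp [cnt_nil] | omega
  | up α β γ a b c hα hβ hγ hpa hpb hpc iha ihb ihc =>
    intro hP
    have IHa := iha hα
    have IHb := ihb hβ
    have IHc := ihc hγ
    obtain ⟨hend, hht⟩ := key hP α β γ hα hβ hγ rfl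
    have haF : ∀ z, a ≠ z ++ [F] := by
      intro z hz
      obtain ⟨s, hs⟩ := (Phi_endF_iff hpa).mpr ⟨z, hz⟩
      exact hend s hs
    have ha : a = [] ∨ ∃ y, a = y ++ [D] := by
      rcases Phi_shape hpa with h | ⟨z, hz⟩ | h
      · exact Or.inl h
      · exact absurd hz (haF z)
      · exact Or.inr h
    have hc_shape := Phi_shape hpc
    -- LHS
    have hL : cnt [U, D, U] (α ++ [U, U] ++ β ++ [D] ++ γ ++ [D])
        = cnt [U, D, U] α + ((if β = [] ∧ γ ≠ [] then 1 else 0)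
            + (cnt [U, D, U] β + cnt [U, D, U] γ)) := by
      have h1 : α ++ [U, U] ++ β ++ [D] ++ γ ++ [D]
          = α ++ (U :: U :: (β ++ D :: (γ ++ [D]))) := by simp
      rw [h1, LA _ hα hend, LUU hβ hγ, LB _ hβ, LC hγ]
    -- FF side
    have hRF : cnt [F, F] (a ++ c ++ U :: (b ++ [D]))
        = cnt [F, F] a + (cnt [F, F] c + cnt [F, F] b) := by
      have h2 : a ++ c ++ U :: (b ++ [D]) = a ++ (c ++ (U :: (b ++ [D]))) := by simp
      rw [h2, MA2 _ ha, MC2 _ hc_shape, MU2]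
    -- FUD side
    have hbD := Phi_head_ne_D hpb
    have hbU := Phi_last_ne_U hpb
    rcases hc_shape with rfl | ⟨z, rfl⟩ | ⟨z, rfl⟩
    · -- c = []
      have hγnil : γ = [] := (Phi_nil_iff hpc).mpr rfl
      subst hγnil
      have hRD : cnt [F, U, D] (a ++ [] ++ U :: (b ++ [D]))
          = cnt [F, U, D] a + cnt [F, U, D] b := by
        have h2 : a ++ ([] : List Step) ++ U :: (b ++ [D])
            = a ++ (U :: (b ++ [D])) := by simp
        rw [h2, NA3 _ ha, NU3 hbU]
      rw [hL, hRF, hRD, IHa, IHb, IHc]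
      first | (simp [cnt_nil]; omega) | simp [cnt_nil] | omega
    · -- c = z ++ [F]
      have hRD : cnt [F, U, D] (a ++ (z ++ [F]) ++ U :: (b ++ [D]))
          = cnt [F, U, D] a + (cnt [F, U, D] (z ++ [F])
              + ((if b = [] then 1 else 0) + cnt [F, U, D] b)) := by
        have h2 : a ++ (z ++ [F]) ++ U :: (b ++ [D])
            = a ++ ((z ++ [F]) ++ (U :: (b ++ [D]))) := by simp
        rw [h2, NA3 _ ha, NC3_F z hbD, NU3 hbU]
      rw [hL, hRF, hRD, IHa, IHb, IHc]
      have hβb : β = [] ↔ b = [] := Phi_nil_iff hpb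
      have hγne : γ ≠ [] := by
        intro h
        have := (Phi_nil_iff hpc).mp h
        simpa using congrArg List.length this
      by_cases hβ0 : β = []
      · rw [if_pos ⟨hβ0, hγne⟩, if_pos (hβb.mp hβ0)]
        omega
      · rw [if_neg (by intro h; exact hβ0 h.1),
          if_neg (by intro h; exact hβ0 (hβb.mpr h))]
        omega
    · -- c = z ++ [D]
      have hRD : cnt [F, U, D] (a ++ (z ++ [D]) ++ U :: (b ++ [D]))
          = cnt [F, U, D] a + (cnt [F, U, D] (z ++ [D]) + cnt [F, U, D] b) := by
        have h2 : a ++ (z ++ [D]) ++ U :: (b ++ [D])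
            = a ++ ((z ++ [D]) ++ (U :: (b ++ [D]))) := by simp
        rw [h2, NA3 _ ha, NC3_D _ (Or.inr ⟨z, rfl⟩), NU3 hbU]
      rw [hL, hRF, hRD, IHa, IHb, IHc]
      have hno : ¬ (β = [] ∧ γ ≠ []) := by
        rintro ⟨rfl, hγne⟩
        have hle1 : height γ ≤ 1 := by
          refine le_trans hht (le_trans (le_of_eq ?_) height_UD_le)
          simp
        rcases DH_low hγ hle1 with rfl | ⟨y, hy⟩
        · exact hγne rfl
        · obtain ⟨s, hs⟩ := (Phi_endF_iff hpc).mp ⟨y, hy⟩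
          have := List.append_inj' hs rfl
          simpa using this.2
      rw [if_neg hno]
      omega
end

section
/- For every n ≥ 1, a path P ∈ D_n^{h,≥} ends with the factor UD if and only if φ(P) ends with a flat step F. Moreover P = (UD)^n if and only if φ(P) = F^n. -/
open Step

lemma dh_ends (P : List Step) (h : DH P) : P = [] ∨ ∃ q, P = q ++ [D] := by
  induction h with
  | nil => left; rfl
  | cons α β hα hβ hh ihα ihβ =>
    right
    rcases ihβ with hβe | ⟨q, hq⟩
    · exact ⟨U :: α, by simp [hβe]⟩
    · exact ⟨U :: (α ++ [D] ++ q), by simp [hq]⟩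

lemma join_repl (k : ℕ) :
    (List.replicate (k+1) ([U,D] : List Step)).flatten =
      (List.replicate k ([U,D] : List Step)).flatten ++ [U, D] := by
  simp [List.replicate_succ']

lemma phi_forward (P m : List Step) (h : Phi P m) :
    ∀ k, P = (List.replicate k ([U,D] : List Step)).flatten → m = List.replicate k F := by
  induction h with
  | nil =>
    intro k hk
    have hl := congrArg List.length hk
    simp at hl
    have : k = 0 := by omega
    simp [this]
  | flat α a hα hphi ih =>
    intro k hk
    cases k with
    | zero => simp at hk
    | succ k' =>
      rw [join_repl] at hk
      have hα' : α = (List.replicate k' ([U,D] : List Step)).flatten :=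
        List.append_cancel_right hk
      have := ih k' hα'
      rw [List.replicate_succ', this]
  | up α β γ a b c hα hβ hγ hpa hpb hpc iha ihb ihc =>
    intro k hk
    exfalso
    obtain ⟨r, hr⟩ : ∃ r, α ++ [U, U] ++ β ++ [D] ++ γ ++ [D] = r ++ [D, D] := by
      rcases dh_ends γ hγ with hγe | ⟨q, hq⟩
      · exact ⟨α ++ [U, U] ++ β, by simp [hγe]⟩
      · exact ⟨α ++ [U, U] ++ β ++ [D] ++ q, by simp [hq]⟩
    rw [hr] at hk
    cases k with
    | zero =>
      have := congrArg List.length hk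
      simp at this
    | succ k' =>
      rw [join_repl] at hk
      have hl := congrArg List.length hk
      simp at hl
      have h2 : ([D, D] : List Step) = [U, D] := List.append_inj_right hk (by simp; omega)
      simp at h2

lemma phi_backward (P m : List Step) (h : Phi P m) :
    ∀ k, m = List.replicate k F → P = (List.replicate k ([U,D] : List Step)).flatten := by
  induction h with
  | nil =>
    intro k hk
    have : k = 0 := by
      have := congrArg List.length hk
      simp at this
      omega
    simp [this]
  | flat α a hα hphi ih =>
    intro k hk
    cases k with
    | zero =>
      have := congrArg List.length hk
      simp at this
    | succ k' =>
      rw [List.replicate_succ'] at hk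
      have ha : a = List.replicate k' F := List.append_cancel_right hk
      rw [join_repl, ih k' ha]
  | up α β γ a b c hα hβ hγ hpa hpb hpc iha ihb ihc =>
    intro k hk
    exfalso
    have hmem : D ∈ a ++ c ++ U :: (b ++ [D]) := by simp
    rw [hk] at hmem
    have := List.eq_of_mem_replicate hmem
    simp at this

/-- P ends with UD iff φ(P) ends with F; and P = (UD)ⁿ iff φ(P) = Fⁿ. -/
theorem stmt18 (n : ℕ) (hn : 1 ≤ n) (P m : List Step) (hP : DH P) (hlen : P.length = 2 * n)
    (hphi : Phi P m) :
    ((∃ α : List Step, P = α ++ [Step.U, Step.D]) ↔ (∃ a : List Step, m = a ++ [Step.F])) ∧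
    (P = (List.replicate n ([Step.U, Step.D] : List Step)).flatten ↔
      m = List.replicate n Step.F) := by
  constructor
  · cases hphi with
    | nil => simp at hlen; omega
    | flat α a hα hphi =>
      constructor
      · intro _; exact ⟨a, rfl⟩
      · intro _; exact ⟨α, rfl⟩
    | up α β γ a b c hα hβ hγ hpa hpb hpc =>
      constructor
      · intro ⟨α', hα'⟩
        exfalso
        obtain ⟨r, hr⟩ : ∃ r, α ++ [U, U] ++ β ++ [D] ++ γ ++ [D] = r ++ [D, D] := by
          rcases dh_ends γ hγ with hγe | ⟨q, hq⟩
          · exact ⟨α ++ [U, U] ++ β, by simp [hγe]⟩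
          · exact ⟨α ++ [U, U] ++ β ++ [D] ++ q, by simp [hq]⟩
        rw [hr] at hα'
        have hl2 := congrArg List.length hα'
        simp at hl2
        have h2 : ([D, D] : List Step) = [U, D] := List.append_inj_right hα' (by omega)
        simp at h2
      · intro ⟨a', ha'⟩
        exfalso
        have h0 : a' ++ [F] = (a ++ c ++ U :: b) ++ [D] := by
          rw [← ha']; simp
        have hl2 := congrArg List.length h0
        simp at hl2
        have h2 : ([F] : List Step) = [D] := List.append_inj_right h0 (by simp; omega)
        simp at h2
  · constructor
    · exact phi_forward P m hphi n
    · exact phi_backward P m hphi n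
end
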